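/- Define, for f ∈ L¹([0,θ], λ_θ) with λ_θ Lebesgue measure on [0,θ], Vf(x) = Σ_{i≥m} f(u_i(x))/(iθ+x)². Then V is the Perron-Frobenius operator of T_θ under λ_θ, i.e. ∫_A Vf dλ_θ = ∫_{T_θ⁻¹(A)} f dλ_θ for every Borel A ⊆ [0,θ], and for every n ≥ 1, Vⁿf(x) = Uⁿg(x)/(1+θx) a.e. in [0,θ], where g(x) = (1+θx)f(x). -/

import Mathlib

open MeasureTheory Real Set
open scoped ENNReal

/-- θ = 1/√m. -/
noncomputable def theta (m : ℕ) : ℝ := 1 / Real.sqrt m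

/-- The θ-expansion transformation T_θ(x) = 1/x − θ·⌊1/(xθ)⌋ for x ≠ 0, T_θ(0) = 0. -/
noncomputable def Tmap (m : ℕ) (x : ℝ) : ℝ :=
  if x = 0 then 0 else 1 / x - theta m * (⌊1 / (x * theta m)⌋ : ℝ)

/-- The invariant measure γ_θ(A) = (1/log(1+θ²)) ∫_A θ/(1+θx) dx on [0,θ]. -/
noncomputable def gammaMeasure (m : ℕ) : Measure ℝ :=
  (ENNReal.ofReal (1 / Real.log (1 + theta m ^ 2))) •
    ((volume.restrict (Icc 0 (theta m))).withDensity
      fun x => ENNReal.ofReal (theta m / (1 + theta m * x)))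

/-- u_i(x) = 1/(iθ + x). -/
noncomputable def uMap (m i : ℕ) (x : ℝ) : ℝ := 1 / (i * theta m + x)

/-- P_i(x) = (1+θx)/((x+iθ)(x+(i+1)θ)). -/
noncomputable def Pfun (m i : ℕ) (x : ℝ) : ℝ :=
  (1 + theta m * x) / ((x + i * theta m) * (x + (i + 1) * theta m))

/-- The Perron-Frobenius operator Uf(x) = Σ_{i≥m} P_i(x)·f(u_i(x)). -/
noncomputable def Uop (m : ℕ) (f : ℝ → ℝ) (x : ℝ) : ℝ :=
  ∑' i : ℕ, Pfun m (i + m) x * f (uMap m (i + m) x)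


/-- Vf(x) = Σ_{i≥m} f(u_i(x))/(iθ+x)². -/
noncomputable def Vop (m : ℕ) (f : ℝ → ℝ) (x : ℝ) : ℝ :=
  ∑' i : ℕ, f (uMap m (i + m) x) / (((i + m : ℕ) : ℝ) * theta m + x) ^ 2

lemma theta_pos {m : ℕ} (hm : 2 ≤ m) : 0 < theta m := by
  have h : (0:ℝ) < m := by exact_mod_cast Nat.lt_of_lt_of_le (by norm_num) hm
  unfold theta; positivity

lemma theta_sq {m : ℕ} (hm : 2 ≤ m) : (m:ℝ) * theta m * theta m = 1 := by
  have h : (0:ℝ) < m := by exact_mod_cast Nat.lt_of_lt_of_le (by norm_num) hm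
  have hs : Real.sqrt m * Real.sqrt m = m := Real.mul_self_sqrt h.le
  have hs0 : Real.sqrt m ≠ 0 := by positivity
  unfold theta
  field_simp
  rw [Real.sq_sqrt h.le]

lemma cpos {m : ℕ} (hm : 2 ≤ m) {c : ℕ} (hc : m ≤ c) : (0:ℝ) < c := by
  have : 0 < c := by omega
  exact_mod_cast this

lemma floor_branch {m : ℕ} (hm : 2 ≤ m) {c : ℕ} (hc : m ≤ c) {x : ℝ}
    (hx : x ∈ Ioo (1/(((c:ℝ)+1)*theta m)) (1/((c:ℝ)*theta m))) :
    ⌊1/(x*theta m)⌋ = (c:ℤ) ∧ Tmap m x = 1/x - (c:ℝ)*theta m := by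
  have hθ := theta_pos hm
  have hcp := cpos hm hc
  have hx0 : 0 < x := lt_trans (by positivity) hx.1
  have hxθ : 0 < x * theta m := by positivity
  have hA : x * ((c:ℝ)*theta m) < 1 := (lt_div_iff₀ (by positivity)).1 hx.2
  have hB : 1 < x * (((c:ℝ)+1)*theta m) := (div_lt_iff₀ (by positivity)).1 hx.1
  have h1 : (c:ℝ) < 1/(x*theta m) := (lt_div_iff₀ hxθ).2 (by nlinarith)
  have h2 : 1/(x*theta m) < (c:ℝ) + 1 := (div_lt_iff₀ hxθ).2 (by nlinarith)
  have hfl : ⌊1/(x*theta m)⌋ = (c:ℤ) := by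
    rw [Int.floor_eq_iff]
    push_cast
    exact ⟨h1.le, h2⟩
  refine ⟨hfl, ?_⟩
  rw [Tmap, if_neg hx0.ne', hfl]
  push_cast
  ring

lemma Tmap_mem_branch {m : ℕ} (hm : 2 ≤ m) {c : ℕ} (hc : m ≤ c) {x : ℝ}
    (hx : x ∈ Ioo (1/(((c:ℝ)+1)*theta m)) (1/((c:ℝ)*theta m))) :
    Tmap m x ∈ Ioo 0 (theta m) := by
  have hθ := theta_pos hm
  have hcp := cpos hm hc
  have hx0 : 0 < x := lt_trans (by positivity) hx.1
  have hA : x * ((c:ℝ)*theta m) < 1 := (lt_div_iff₀ (by positivity)).1 hx.2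
  have hB : 1 < x * (((c:ℝ)+1)*theta m) := (div_lt_iff₀ (by positivity)).1 hx.1
  obtain ⟨-, hT⟩ := floor_branch hm hc hx
  rw [hT]
  have h4 : (c:ℝ) * theta m < 1/x := (lt_div_iff₀ hx0).2 (by nlinarith)
  have h5 : 1/x < ((c:ℝ)+1) * theta m := (div_lt_iff₀ hx0).2 (by nlinarith)
  constructor <;> [linarith; nlinarith]

lemma Tmap_right_endpoint {m : ℕ} (hm : 2 ≤ m) {c : ℕ} (hc : m ≤ c) :
    Tmap m (1/((c:ℝ)*theta m)) = 0 := by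
  have hθ := theta_pos hm
  have hcp := cpos hm hc
  have hb : (0:ℝ) < 1/((c:ℝ)*theta m) := by positivity
  have hcθ : ((c:ℝ)*theta m) ≠ 0 := by positivity
  rw [Tmap, if_neg hb.ne']
  have h1 : 1/(1/((c:ℝ)*theta m)) = (c:ℝ)*theta m := by field_simp
  have h2 : 1/((1/((c:ℝ)*theta m)) * theta m) = (c:ℝ) := by
    have hθ0 : theta m ≠ 0 := hθ.ne'
    field_simp
  rw [h2, h1]
  have : ⌊(c:ℝ)⌋ = (c:ℤ) := by exact_mod_cast Int.floor_natCast c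
  rw [this]
  push_cast
  ring

/-- Branch description of the preimage. -/

lemma branch_eq {m : ℕ} (hm : 2 ≤ m) {c : ℕ} (hc : m ≤ c) {A' : Set ℝ}
    (hA' : A' ⊆ Ioo 0 (theta m)) :
    Tmap m ⁻¹' A' ∩ Ioc (1/(((c:ℝ)+1)*theta m)) (1/((c:ℝ)*theta m))
      = uMap m c '' A' := by
  have hθ := theta_pos hm
  have hcp := cpos hm hc
  ext x
  constructor
  · rintro ⟨hTx, hx1, hx2⟩
    have hxIoo : x ∈ Ioo (1/(((c:ℝ)+1)*theta m)) (1/((c:ℝ)*theta m)) := by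
      rcases lt_or_eq_of_le hx2 with h | h
      · exact ⟨hx1, h⟩
      · exfalso
        rw [mem_preimage, h, Tmap_right_endpoint hm hc] at hTx
        exact (hA' hTx).1.ne rfl
    obtain ⟨-, hT⟩ := floor_branch hm hc hxIoo
    have hx0 : 0 < x := lt_trans (by positivity) hxIoo.1
    refine ⟨Tmap m x, hTx, ?_⟩
    rw [uMap, hT]
    have h7 : (c:ℝ) * theta m + (1/x - (c:ℝ)*theta m) = 1/x := by ring
    rw [h7, one_div_one_div]
  · rintro ⟨y, hy, rfl⟩
    obtain ⟨hy0, hyθ⟩ := hA' hy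
    have hd : 0 < (c:ℝ) * theta m + y := by positivity
    have hxIoo : uMap m c y ∈ Ioo (1/(((c:ℝ)+1)*theta m)) (1/((c:ℝ)*theta m)) := by
      rw [uMap]
      constructor
      · apply one_div_lt_one_div_of_lt hd
        nlinarith
      · apply one_div_lt_one_div_of_lt (by positivity)
        nlinarith
    obtain ⟨-, hT⟩ := floor_branch hm hc hxIoo
    refine ⟨?_, hxIoo.1, hxIoo.2.le⟩
    rw [mem_preimage, hT, uMap]
    have : 1/(1/((c:ℝ) * theta m + y)) = (c:ℝ)*theta m + y := by
      rw [one_div_one_div]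
    rw [this]
    simpa using hy

lemma inv_mtheta {m : ℕ} (hm : 2 ≤ m) : 1 / ((m:ℝ) * theta m) = theta m := by
  have h := theta_sq hm
  have hp := theta_pos hm
  have hm0 : (0:ℝ) < m := cpos hm le_rfl
  rw [div_eq_iff (by positivity)]
  nlinarith

lemma cover {m : ℕ} (hm : 2 ≤ m) :
    Ioc (0:ℝ) (theta m)
      = ⋃ i : ℕ, Ioc (1/(((((i+m:ℕ)):ℝ)+1)*theta m)) (1/(((i+m:ℕ):ℝ)*theta m)) := by
  have hθ := theta_pos hm
  have hm0 : (0:ℝ) < m := cpos hm le_rfl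
  ext x
  simp only [mem_iUnion, mem_Ioc]
  constructor
  · rintro ⟨hx0, hxθ⟩
    have hxθp : 0 < x * theta m := by positivity
    have hmle : (m:ℝ) ≤ 1/(x*theta m) := by
      rw [le_div_iff₀ hxθp]
      have h := theta_sq hm
      nlinarith
    set k := ⌊1/(x*theta m)⌋ with hk
    have hkm : (m:ℤ) ≤ k := Int.le_floor.2 (by exact_mod_cast hmle)
    have hk0 : 0 ≤ k := le_trans (by exact_mod_cast Nat.zero_le m) hkm
    refine ⟨k.toNat - m, ?_⟩
    have hnat : ((k.toNat - m + m : ℕ) : ℝ) = (k:ℝ) := by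
      have h1 : m ≤ k.toNat := by omega
      have : (k.toNat - m + m : ℕ) = k.toNat := by omega
      rw [this]
      exact_mod_cast Int.toNat_of_nonneg hk0
    rw [hnat]
    have hkpos : (0:ℝ) < (k:ℝ) := by
      have : (0:ℤ) < k := by omega
      exact_mod_cast this
    have hfle : (k:ℝ) ≤ 1/(x*theta m) := Int.floor_le _
    have hflt : 1/(x*theta m) < (k:ℝ) + 1 := Int.lt_floor_add_one _
    have hflt' : 1 < ((k:ℝ)+1) * (x * theta m) := (div_lt_iff₀ hxθp).1 hflt
    have hfle' : (k:ℝ) * (x * theta m) ≤ 1 := (le_div_iff₀ hxθp).1 hfle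
    constructor
    · rw [div_lt_iff₀ (by positivity)]
      nlinarith
    · rw [le_div_iff₀ (by positivity)]
      nlinarith
  · rintro ⟨i, h1, h2⟩
    have hc : (0:ℝ) < ((i+m:ℕ):ℝ) := cpos hm (by omega)
    have hx0 : 0 < x := lt_trans (by positivity) h1
    have hmle : (m:ℝ) ≤ ((i+m:ℕ):ℝ) := by exact_mod_cast Nat.le_add_left m i
    have hb : 1/(((i+m:ℕ):ℝ)*theta m) ≤ 1/((m:ℝ)*theta m) :=
      one_div_le_one_div_of_le (by positivity) (by nlinarith)
    rw [inv_mtheta hm] at hb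
    exact ⟨hx0, le_trans h2 hb⟩

lemma Tmap_measurable (m : ℕ) : Measurable (Tmap m) := by
  unfold Tmap
  apply Measurable.ite (measurableSet_eq)
  · exact measurable_const
  · apply Measurable.sub
    · exact measurable_const.div measurable_id
    · apply Measurable.const_mul
      apply Measurable.comp (measurable_of_countable _)
      apply Int.measurable_floor.comp
      exact measurable_const.div (measurable_id.mul_const (theta m))

lemma uMap_hasDeriv {m : ℕ} (hm : 2 ≤ m) {c : ℕ} (hc : m ≤ c) {s : Set ℝ}
    (hs : s ⊆ Ici 0) {x : ℝ} (hx : x ∈ s) :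
    HasDerivWithinAt (uMap m c) (-(((c:ℝ)*theta m + x)^2)⁻¹) s x := by
  have hθ := theta_pos hm
  have hcp := cpos hm hc
  have hd : (0:ℝ) < (c:ℝ)*theta m + x := by
    have := hs hx
    simp only [mem_Ici] at this
    positivity
  have h1 : HasDerivAt (fun y : ℝ => (c:ℝ)*theta m + y) 1 x := by
    simpa using (hasDerivAt_id x).const_add ((c:ℝ)*theta m)
  have h2 := h1.inv hd.ne'
  have : uMap m c = fun y => ((c:ℝ)*theta m + y)⁻¹ := by
    funext y; rw [uMap, one_div]
  have heq : -(((c:ℝ)*theta m + x)^2)⁻¹ = -1 / ((c:ℝ)*theta m + x)^2 := by ring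
  rw [this, heq]
  exact h2.hasDerivWithinAt

lemma uMap_injOn {m : ℕ} (hm : 2 ≤ m) {c : ℕ} (hc : m ≤ c) {s : Set ℝ}
    (hs : s ⊆ Ici 0) : InjOn (uMap m c) s := by
  intro x hx y hy h
  have hθ := theta_pos hm
  have hcp := cpos hm hc
  have hdx : (0:ℝ) < (c:ℝ)*theta m + x := by
    have := hs hx; simp only [mem_Ici] at this; positivity
  have hdy : (0:ℝ) < (c:ℝ)*theta m + y := by
    have := hs hy; simp only [mem_Ici] at this; positivity
  rw [uMap, uMap, div_eq_div_iff hdx.ne' hdy.ne'] at h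
  nlinarith [h]

/-- Bochner change of variables for a branch. -/

lemma cov_branch {m : ℕ} (hm : 2 ≤ m) {c : ℕ} (hc : m ≤ c) {s : Set ℝ}
    (hsm : MeasurableSet s) (hs : s ⊆ Ici 0) (f : ℝ → ℝ) :
    ∫ y in uMap m c '' s, f y = ∫ x in s, f (uMap m c x) / ((c:ℝ)*theta m + x)^2 := by
  have hθ := theta_pos hm
  have hcp := cpos hm hc
  rw [integral_image_eq_integral_abs_deriv_smul hsm
    (fun x hx => uMap_hasDeriv hm hc hs hx) (uMap_injOn hm hc hs) f]
  apply setIntegral_congr_fun hsm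
  intro x hx
  have hd : (0:ℝ) < (c:ℝ)*theta m + x := by
    have := hs hx; simp only [mem_Ici] at this; positivity
  have h9 : |(-(((c:ℝ)*theta m + x)^2)⁻¹)| = (((c:ℝ)*theta m + x)^2)⁻¹ := by
    rw [abs_neg, abs_of_nonneg (by positivity)]
  simp only [h9, smul_eq_mul]
  rw [div_eq_mul_inv, mul_comm]

lemma cov_branch_lintegral {m : ℕ} (hm : 2 ≤ m) {c : ℕ} (hc : m ≤ c) {s : Set ℝ}
    (hsm : MeasurableSet s) (hs : s ⊆ Ici 0) (g : ℝ → ℝ≥0∞) :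
    ∫⁻ y in uMap m c '' s, g y
      = ∫⁻ x in s, ENNReal.ofReal ((((c:ℝ)*theta m + x)^2)⁻¹) * g (uMap m c x) := by
  have hθ := theta_pos hm
  have hcp := cpos hm hc
  rw [lintegral_image_eq_lintegral_abs_det_fderiv_mul volume hsm
    (fun x hx => (uMap_hasDeriv hm hc hs hx).hasFDerivWithinAt)
    (uMap_injOn hm hc hs) g]
  apply setLIntegral_congr_fun hsm
  intro x hx
  have hd : (0:ℝ) < (c:ℝ)*theta m + x := by
    have := hs hx; simp only [mem_Ici] at this; positivity
  beta_reduce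
  congr 1
  rw [ContinuousLinearMap.det_toSpanSingleton, abs_neg, abs_of_nonneg (by positivity)]

lemma null_preimage {m : ℕ} (hm : 2 ≤ m) {c : ℕ} (hc : m ≤ c) {N : Set ℝ}
    (hN : volume (N ∩ Icc 0 (theta m)) = 0) :
    volume {x | x ∈ Ioo 0 (theta m) ∧ uMap m c x ∈ N} = 0 := by
  have hθ := theta_pos hm
  have hcp := cpos hm hc
  set v : ℝ → ℝ := fun y => 1/y - (c:ℝ)*theta m with hv
  set M : Set ℝ :=
    toMeasurable volume (N ∩ Icc 0 (theta m)) ∩ Icc (1/(((c:ℝ)+1)*theta m)) (1/((c:ℝ)*theta m))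
    with hM
  have hMm : MeasurableSet M :=
    (measurableSet_toMeasurable _ _).inter measurableSet_Icc
  have hM0 : volume M = 0 := by
    apply measure_mono_null (inter_subset_left)
    rw [measure_toMeasurable]
    exact hN
  have hMpos : ∀ y ∈ M, 1/(((c:ℝ)+1)*theta m) ≤ y := fun y hy => hy.2.1
  have hsub : {x | x ∈ Ioo 0 (theta m) ∧ uMap m c x ∈ N} ⊆ v '' M := by
    rintro x ⟨⟨hx0, hxθ⟩, hxN⟩
    have hd : (0:ℝ) < (c:ℝ)*theta m + x := by positivity
    refine ⟨uMap m c x, ⟨?_, ?_, ?_⟩, ?_⟩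
    · apply subset_toMeasurable
      refine ⟨hxN, ?_, ?_⟩
      · rw [uMap]; positivity
      · rw [uMap]
        have h1 : 1/((c:ℝ)*theta m + x) ≤ 1/((m:ℝ)*theta m) := by
          apply one_div_le_one_div_of_le (by positivity)
          have : (m:ℝ) ≤ (c:ℝ) := by exact_mod_cast hc
          nlinarith
        rw [inv_mtheta hm] at h1
        exact h1
    · rw [uMap]
      apply one_div_le_one_div_of_le (by positivity)
      nlinarith
    · rw [uMap]
      apply one_div_le_one_div_of_le (by positivity)
      nlinarith
    · rw [hv, uMap]
      simp only [one_div_one_div]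
      ring
  apply measure_mono_null hsub
  have hvderiv : ∀ y ∈ M, HasDerivWithinAt v (-1/y^2) M y := by
    intro y hy
    have hypos : 0 < y := lt_of_lt_of_le (by positivity) (hMpos y hy)
    have h1 : HasDerivAt (fun y : ℝ => 1/y) (-1/y^2) y := by
      have := hasDerivAt_inv hypos.ne'
      simpa [one_div, neg_div] using this
    exact (h1.sub_const ((c:ℝ)*theta m)).hasDerivWithinAt
  have hvinj : InjOn v M := by
    intro y1 h1 y2 h2 he
    have hp1 : 0 < y1 := lt_of_lt_of_le (by positivity) (hMpos y1 h1)
    have hp2 : 0 < y2 := lt_of_lt_of_le (by positivity) (hMpos y2 h2)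
    rw [hv] at he
    simp only [sub_left_inj] at he
    rw [div_eq_div_iff hp1.ne' hp2.ne'] at he
    linarith
  have := lintegral_image_eq_lintegral_abs_det_fderiv_mul volume hMm
    (fun y hy => (hvderiv y hy).hasFDerivWithinAt) hvinj (fun _ => 1)
  rw [setLIntegral_one] at this
  rw [this]
  rw [Measure.restrict_eq_zero.2 hM0, lintegral_zero_measure]

lemma part1 {m : ℕ} (hm : 2 ≤ m) (f : ℝ → ℝ)
    (hf : Integrable f (volume.restrict (Icc 0 (theta m))))
    {A : Set ℝ} (hA : A ⊆ Icc 0 (theta m)) (hAm : MeasurableSet A) :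
    ∫ x in A, Vop m f x ∂(volume.restrict (Icc 0 (theta m)))
      = ∫ x in Tmap m ⁻¹' A, f x ∂(volume.restrict (Icc 0 (theta m))) := by
  have hθ := theta_pos hm
  set A' : Set ℝ := A ∩ Ioo 0 (theta m) with hA'def
  have hA'm : MeasurableSet A' := hAm.inter measurableSet_Ioo
  have hA'sub : A' ⊆ Ioo 0 (theta m) := inter_subset_right
  have hA'pos : A' ⊆ Ici 0 := fun x hx => (hA'sub hx).1.le
  set S : ℕ → Set ℝ := fun i => uMap m (i + m) '' A' with hSdef
  have hcm : ∀ i : ℕ, m ≤ i + m := fun i => Nat.le_add_left m i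
  have hSval : ∀ i : ℕ, S i = uMap m (i + m) '' A' := fun i => rfl
  have hSeq : ∀ i : ℕ,
      Tmap m ⁻¹' A' ∩ Ioc (1/((((i+m:ℕ):ℝ)+1)*theta m)) (1/(((i+m:ℕ):ℝ)*theta m)) = S i :=
    fun i => branch_eq hm (hcm i) hA'sub
  have hSm : ∀ i : ℕ, MeasurableSet (S i) := by
    intro i
    rw [← hSeq i]
    exact (Tmap_measurable m hA'm).inter measurableSet_Ioc
  have hSsubIoc : ∀ i : ℕ,
      S i ⊆ Ioc (1/((((i+m:ℕ):ℝ)+1)*theta m)) (1/(((i+m:ℕ):ℝ)*theta m)) := by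
    intro i
    rw [← hSeq i]
    exact inter_subset_right
  have hSsub : ∀ i : ℕ, S i ⊆ Ioc 0 (theta m) := by
    intro i
    refine subset_trans (hSsubIoc i) ?_
    rw [cover hm]
    exact subset_iUnion
      (fun j => Ioc (1/((((j+m:ℕ):ℝ)+1)*theta m)) (1/(((j+m:ℕ):ℝ)*theta m))) i
  have hdisj : Pairwise (Function.onFun Disjoint S) := by
    have hkey : ∀ i j : ℕ, i < j → Disjoint (S i) (S j) := by
      intro i j hij
      refine Set.disjoint_left.2 ?_
      intro x hxi hxj
      obtain ⟨hi1, hi2⟩ := hSsubIoc i hxi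
      obtain ⟨hj1, hj2⟩ := hSsubIoc j hxj
      have h9 : ((i+m+1:ℕ):ℝ) ≤ ((j+m:ℕ):ℝ) := by
        exact_mod_cast (by omega : i+m+1 ≤ j+m)
      have hord : 1/(((j+m:ℕ):ℝ)*theta m) ≤ 1/(((((i+m:ℕ)):ℝ)+1)*theta m) := by
        apply one_div_le_one_div_of_le (by positivity)
        push_cast at h9 ⊢
        nlinarith
      linarith
    intro i j hij
    rcases lt_or_gt_of_ne hij with h | h
    · exact hkey i j h
    · exact (hkey j i h).symm
  have hU : ⋃ i, S i = Tmap m ⁻¹' A' ∩ Ioc 0 (theta m) := by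
    rw [cover hm, inter_iUnion]
    exact iUnion_congr fun i => (hSeq i).symm
  -- LHS reduction
  have hLHS : ∫ x in A, Vop m f x ∂(volume.restrict (Icc 0 (theta m)))
      = ∫ x in A', Vop m f x := by
    rw [Measure.restrict_restrict hAm, inter_eq_self_of_subset_left hA]
    apply setIntegral_congr_set
    rw [ae_eq_set]
    refine ⟨measure_mono_null ?_ (Set.Finite.measure_zero
      (Set.toFinite ({0, theta m} : Set ℝ)) volume), ?_⟩
    · rintro x ⟨hxA, hxA'⟩
      have hxI := hA hxA
      have hni : x ∉ Ioo 0 (theta m) := fun h => hxA' ⟨hxA, h⟩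
      rcases eq_or_lt_of_le hxI.1 with h0 | h0
      · exact Or.inl h0.symm
      · rcases eq_or_lt_of_le hxI.2 with h1 | h1
        · exact Or.inr h1
        · exact absurd ⟨h0, h1⟩ hni
    · have he : A' \ A = ∅ := by
        rw [diff_eq_empty]
        exact inter_subset_left
      rw [he]
      simp
  -- RHS reduction
  have hRHS : ∫ x in Tmap m ⁻¹' A, f x ∂(volume.restrict (Icc 0 (theta m)))
      = ∫ x in ⋃ i, S i, f x := by
    rw [Measure.restrict_restrict (Tmap_measurable m hAm)]
    apply setIntegral_congr_set
    rw [hU, ae_eq_set]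
    constructor
    · refine measure_mono_null ?_ (measure_union_null (measure_singleton 0)
        (Set.Countable.measure_zero (countable_range fun k : ℤ => 1/(theta m * (k:ℝ))) volume))
      rintro x ⟨⟨hxT, hxI⟩, hxE⟩
      by_cases hx0 : x ∈ Ioc 0 (theta m)
      · right
        have hTx : Tmap m x ∉ A' := fun h => hxE ⟨h, hx0⟩
        have hTA := hA hxT
        have hTnotIoo : Tmap m x ∉ Ioo 0 (theta m) := fun h => hTx ⟨hxT, h⟩
        have hxne : x ≠ 0 := hx0.1.ne'
        have hTval : Tmap m x = 1/x - theta m * (⌊1/(x*theta m)⌋:ℝ) := by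
          rw [Tmap, if_neg hxne]
        have hTend : Tmap m x = 0 ∨ Tmap m x = theta m := by
          rcases eq_or_lt_of_le hTA.1 with h0 | h0
          · exact Or.inl h0.symm
          · rcases eq_or_lt_of_le hTA.2 with h1 | h1
            · exact Or.inr h1
            · exact absurd ⟨h0, h1⟩ hTnotIoo
        rcases hTend with h | h
        · refine ⟨⌊1/(x*theta m)⌋, ?_⟩
          have h2 : 1/x = theta m * (⌊1/(x*theta m)⌋:ℝ) := by
            rw [hTval] at h; linarith
          simp only [← h2, one_div_one_div]
        · refine ⟨⌊1/(x*theta m)⌋ + 1, ?_⟩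
          have h2 : 1/x = theta m * ((⌊1/(x*theta m)⌋:ℝ) + 1) := by
            rw [hTval] at h; linarith
          push_cast
          simp only [← h2, one_div_one_div]
      · left
        have hx00 : x = 0 := by
          rcases eq_or_lt_of_le hxI.1 with h0 | h0
          · exact h0.symm
          · exact absurd ⟨h0, hxI.2⟩ hx0
        simp [hx00]
    · have he : (Tmap m ⁻¹' A' ∩ Ioc 0 (theta m)) \ (Tmap m ⁻¹' A ∩ Icc 0 (theta m)) = ∅ := by
        rw [diff_eq_empty]
        rintro x ⟨hx1, hx2⟩
        exact ⟨inter_subset_left hx1, Ioc_subset_Icc_self hx2⟩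
      rw [he]
      simp
  rw [hLHS, hRHS]
  -- integrability on the union
  have hUnionSub : (⋃ i, S i) ⊆ Icc 0 (theta m) :=
    iUnion_subset fun i => (hSsub i).trans Ioc_subset_Icc_self
  have hfIcc : IntegrableOn f (Icc 0 (theta m)) volume := hf
  have hfint : IntegrableOn f (⋃ i, S i) volume := hfIcc.mono_set hUnionSub
  -- a.e. strong measurability of the summands
  obtain ⟨f₀, hf₀sm, hff₀⟩ := hf.aestronglyMeasurable
  have hNnull : volume ({y | f y ≠ f₀ y} ∩ Icc 0 (theta m)) = 0 := by
    have h := ae_iff.1 hff₀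
    rwa [Measure.restrict_apply' measurableSet_Icc] at h
  have hGaesm : ∀ i : ℕ, AEStronglyMeasurable
      (fun x => f (uMap m (i + m) x) / (((i + m : ℕ) : ℝ) * theta m + x) ^ 2)
      (volume.restrict A') := by
    intro i
    have hu : Measurable (uMap m (i+m)) := by
      apply measurable_const.div
      exact measurable_const.add measurable_id
    have hG₀ : Measurable fun x =>
        f₀ (uMap m (i + m) x) / (((i + m : ℕ) : ℝ) * theta m + x) ^ 2 := by
      apply Measurable.div
      · exact hf₀sm.measurable.comp hu
      · exact (measurable_const.add measurable_id).pow_const 2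
    apply (hG₀.aestronglyMeasurable).congr
    rw [Filter.EventuallyEq, ae_restrict_iff' hA'm, ae_iff]
    refine measure_mono_null ?_ (null_preimage hm (hcm i) hNnull)
    intro x hx
    simp only [mem_setOf_eq, not_forall] at hx
    obtain ⟨hxA', hne⟩ := hx
    refine ⟨hA'sub hxA', fun heq => hne ?_⟩
    rw [heq]
  -- per-branch lintegral identity
  have hlin : ∀ i : ℕ,
      ∫⁻ x in A', (‖f (uMap m (i + m) x) / (((i + m : ℕ) : ℝ) * theta m + x) ^ 2‖₊ : ℝ≥0∞)
        = ∫⁻ y in S i, (‖f y‖₊ : ℝ≥0∞) := by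
    intro i
    rw [hSval i,
      cov_branch_lintegral hm (hcm i) hA'm hA'pos (fun y => (‖f y‖₊ : ℝ≥0∞))]
    apply setLIntegral_congr_fun hA'm
    intro x hx
    have hx0 : (0:ℝ) ≤ x := hA'pos hx
    have hcp := cpos hm (hcm i)
    have hd : (0:ℝ) < ((i+m:ℕ):ℝ) * theta m + x := by positivity
    beta_reduce
    rw [div_eq_mul_inv, nnnorm_mul, ENNReal.coe_mul,
      ← enorm_eq_nnnorm ((((i+m:ℕ):ℝ)*theta m + x)^2)⁻¹,
      Real.enorm_eq_ofReal (show (0:ℝ) ≤ ((((i+m:ℕ):ℝ)*theta m + x)^2)⁻¹ by positivity),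
      mul_comm]
  -- finiteness of the sum of lintegrals
  have hfin : ∑' i : ℕ, ∫⁻ x,
      (‖f (uMap m (i + m) x) / (((i + m : ℕ) : ℝ) * theta m + x) ^ 2‖₊ : ℝ≥0∞)
        ∂(volume.restrict A') ≠ ⊤ := by
    have h1 : ∀ i : ℕ, ∫⁻ x,
        (‖f (uMap m (i + m) x) / (((i + m : ℕ) : ℝ) * theta m + x) ^ 2‖₊ : ℝ≥0∞)
          ∂(volume.restrict A') = ∫⁻ y in S i, (‖f y‖₊ : ℝ≥0∞) := hlin
    rw [tsum_congr h1, ← lintegral_iUnion hSm hdisj]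
    have h2 : ∫⁻ y in ⋃ i, S i, (‖f y‖₊ : ℝ≥0∞) ≤ ∫⁻ y in Icc 0 (theta m), (‖f y‖₊ : ℝ≥0∞) :=
      lintegral_mono_set hUnionSub
    exact (lt_of_le_of_lt h2 hf.2).ne
  -- put everything together
  calc ∫ x in A', Vop m f x
      = ∫ x in A', ∑' i : ℕ,
          f (uMap m (i + m) x) / (((i + m : ℕ) : ℝ) * theta m + x) ^ 2 := by
        simp only [Vop]
    _ = ∑' i : ℕ, ∫ x in A',
          f (uMap m (i + m) x) / (((i + m : ℕ) : ℝ) * theta m + x) ^ 2 :=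
        integral_tsum hGaesm hfin
    _ = ∑' i : ℕ, ∫ y in S i, f y := by
        refine tsum_congr fun i => ?_
        rw [hSval i, cov_branch hm (hcm i) hA'm hA'pos f]
    _ = ∫ y in ⋃ i, S i, f y := (integral_iUnion hSm hdisj hfint).symm

lemma denom_pos {m : ℕ} (hm : 2 ≤ m) (i : ℕ) {x : ℝ} (hx : 0 ≤ x) :
    0 < ((i + m : ℕ) : ℝ) * theta m + x := by
  have h1 : (0:ℝ) < ((i + m : ℕ) : ℝ) := by
    have : 0 < i + m := by omega
    exact_mod_cast this
  have := theta_pos hm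
  nlinarith

lemma uMap_nonneg {m : ℕ} (hm : 2 ≤ m) (i : ℕ) {x : ℝ} (hx : 0 ≤ x) :
    0 ≤ uMap m (i + m) x := by
  have := denom_pos hm i hx
  unfold uMap; positivity

lemma key_conj {m : ℕ} (hm : 2 ≤ m) (φ ψ : ℝ → ℝ)
    (h : ∀ y, 0 ≤ y → φ y = (1 + theta m * y) * ψ y) (x : ℝ) (hx : 0 ≤ x) :
    Uop m φ x = (1 + theta m * x) * Vop m ψ x := by
  rw [Uop, Vop, ← tsum_mul_left]
  congr 1
  funext i
  have hd : 0 < ((i + m : ℕ) : ℝ) * theta m + x := denom_pos hm i hx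
  have hd' : 0 < ((i + m : ℕ) : ℝ) * theta m + x + theta m := by
    have := theta_pos hm; linarith
  rw [h _ (uMap_nonneg hm i hx)]
  rw [Pfun, uMap]
  have hθ := theta_pos hm
  push_cast
  field_simp
  ring

lemma iter_conj {m : ℕ} (hm : 2 ≤ m) (f : ℝ → ℝ) :
    ∀ n : ℕ, ∀ x : ℝ, 0 ≤ x →
      (Uop m)^[n] (fun y => (1 + theta m * y) * f y) x = (1 + theta m * x) * (Vop m)^[n] f x := by
  intro n
  induction n with
  | zero => intro x _; simp
  | succ k ih =>
      intro x hx
      rw [Function.iterate_succ_apply', Function.iterate_succ_apply']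
      exact key_conj hm _ _ (fun y hy => ih y hy) x hx

lemma part2 {m : ℕ} (hm : 2 ≤ m) (f : ℝ → ℝ) (n : ℕ) :
    ∀ᵐ x ∂(volume.restrict (Icc 0 (theta m))),
      (Vop m)^[n] f x =
        (Uop m)^[n] (fun y => (1 + theta m * y) * f y) x / (1 + theta m * x) := by
  filter_upwards [ae_restrict_mem measurableSet_Icc] with x hx
  have h1 : 0 < 1 + theta m * x := by
    have := theta_pos hm; nlinarith [hx.1]
  rw [iter_conj hm f n x hx.1]
  field_simp

/-- V is the Perron-Frobenius operator of T_θ under Lebesgue measure λ_θ on [0,θ],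
and Vⁿf = Uⁿg/(1+θx) a.e. where g(x) = (1+θx)f(x). -/
theorem Vop_perron_frobenius (m : ℕ) (hm : 2 ≤ m) (hns : ¬ IsSquare m) :
    ∀ f : ℝ → ℝ, Integrable f (volume.restrict (Icc 0 (theta m))) →
      (∀ A ⊆ Icc 0 (theta m), MeasurableSet A →
          ∫ x in A, Vop m f x ∂(volume.restrict (Icc 0 (theta m))) =
            ∫ x in (Tmap m) ⁻¹' A, f x ∂(volume.restrict (Icc 0 (theta m)))) ∧
      (∀ n : ℕ, 1 ≤ n →
        ∀ᵐ x ∂(volume.restrict (Icc 0 (theta m))),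
          (Vop m)^[n] f x =
            (Uop m)^[n] (fun y => (1 + theta m * y) * f y) x / (1 + theta m * x)) := by
  intro f hf
  constructor
  · intro A hA hAm
    exact part1 hm f hf hA hAm
  · intro n _
    exact part2 hm f n
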